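/- Let μ ∈ (0, 1/2) and let M be the 2×2 matrix with rows (−1, 1) and (−μ(1−μ), −2), with eigenvectors p = (1, −μ) and q = (1, μ−1) for the eigenvalues −1−μ and μ−2. Suppose Y = (Y₁, Y₂) : [0,∞) → ℝ² is continuously differentiable, Y(s) ≠ 0 for all s, |Y(s)| → 0 as s → ∞, |Y'(s) − M·Y(s)| ≤ K|Y(s)|² for all s ≥ 0 and some K > 0, and in addition Y₂(s) < 0 and Y₂(s) > −Y₁(s)/2 for all s ≥ 0. Then the coefficient a in the asymptotic expansion |Y(s) − a·e^{−(1+μ)s}·p − b·e^{(μ−2)s}·q| ≤ C·e^{−2(1+μ)s} is strictly positive. -/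

import Mathlib

open scoped Topology
open Set Filter

/-- The action of the matrix `M = [[-1, 1], [-μ(1-μ), -2]]` on a vector of `ℝ²`. -/
noncomputable def Mmul (μ : ℝ) (v : EuclideanSpace ℝ (Fin 2)) : EuclideanSpace ℝ (Fin 2) :=
  (EuclideanSpace.equiv (Fin 2) ℝ).symm ![-v 0 + v 1, -(μ * (1 - μ)) * v 0 - 2 * v 1]

/-- The eigenvector `p = (1, -μ)` of `M` for the eigenvalue `-1-μ`. -/
noncomputable def pvec (μ : ℝ) : EuclideanSpace ℝ (Fin 2) :=
  (EuclideanSpace.equiv (Fin 2) ℝ).symm ![1, -μ]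

/-- The eigenvector `q = (1, μ-1)` of `M` for the eigenvalue `μ-2`. -/
noncomputable def qvec (μ : ℝ) : EuclideanSpace ℝ (Fin 2) :=
  (EuclideanSpace.equiv (Fin 2) ℝ).symm ![1, μ - 1]

private lemma eabs2 (x : EuclideanSpace ℝ (Fin 2)) (i : Fin 2) : |x i| ≤ ‖x‖ := by
  rw [EuclideanSpace.norm_eq]
  rw [show |x i| = Real.sqrt (|x i| ^ 2) by rw [Real.sqrt_sq_eq_abs, abs_abs]]
  apply Real.sqrt_le_sqrt
  rw [Fin.sum_univ_two]
  fin_cases i <;> simp [sq_abs] <;> positivity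

private lemma enorm2 (x : EuclideanSpace ℝ (Fin 2)) : ‖x‖ ≤ |x 0| + |x 1| := by
  rw [EuclideanSpace.norm_eq, Fin.sum_univ_two]
  rw [show |x 0| + |x 1| = Real.sqrt ((|x 0| + |x 1|) ^ 2) by
    rw [Real.sqrt_sq (by positivity)]]
  apply Real.sqrt_le_sqrt
  have := abs_nonneg (x 0); have := abs_nonneg (x 1)
  simp only [Real.norm_eq_abs]
  nlinarith [sq_abs (x 0), sq_abs (x 1)]

private lemma mono_aux (f f' : ℝ → ℝ) (ρ A : ℝ) (hρ : 0 < ρ)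
    (hdiff : ∀ s, 0 ≤ s → HasDerivWithinAt f (f' s) (Set.Ici 0) s)
    (hb : ∀ s, 0 ≤ s → -(A * Real.exp (-ρ * s)) ≤ f' s) :
    MonotoneOn (fun s => f s - A / ρ * Real.exp (-ρ * s)) (Set.Ici 0) := by
  have hexp : ∀ s : ℝ, HasDerivAt (fun t => A / ρ * Real.exp (-ρ * t))
      (-(A * Real.exp (-ρ * s))) s := by
    intro s
    have h1 : HasDerivAt (fun t : ℝ => -ρ * t) (-ρ) s := by
      simpa using (hasDerivAt_id s).const_mul (-ρ)
    have h3 := ((Real.hasDerivAt_exp (-ρ * s)).comp s h1).const_mul (A / ρ)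
    refine h3.congr_deriv ?_
    rw [div_mul_eq_mul_div, div_eq_iff hρ.ne']
    ring
  have hF : ∀ s, 0 ≤ s → HasDerivWithinAt (fun t => f t - A / ρ * Real.exp (-ρ * t))
      (f' s + A * Real.exp (-ρ * s)) (Set.Ici 0) s := by
    intro s hs
    have := (hdiff s hs).sub (hexp s).hasDerivWithinAt
    exact this.congr_deriv (by ring)
  apply monotoneOn_of_deriv_nonneg (convex_Ici 0)
  · intro s hs; exact (hF s hs).continuousWithinAt
  · rw [interior_Ici]
    intro x hx
    exact (((hF x (le_of_lt hx)).hasDerivAt (Ici_mem_nhds hx)).differentiableAt).differentiableWithinAt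
  · rw [interior_Ici]
    intro x hx
    rw [((hF x (le_of_lt hx)).hasDerivAt (Ici_mem_nhds hx)).deriv]
    have := hb x (le_of_lt hx); linarith

private lemma decay_limit (f f' : ℝ → ℝ) (ρ A : ℝ) (hρ : 0 < ρ) (hA : 0 ≤ A)
    (hdiff : ∀ s, 0 ≤ s → HasDerivWithinAt f (f' s) (Set.Ici 0) s)
    (hb : ∀ s, 0 ≤ s → |f' s| ≤ A * Real.exp (-ρ * s)) :
    ∃ ℓ : ℝ, Filter.Tendsto f Filter.atTop (𝓝 ℓ) ∧
      ∀ s, 0 ≤ s → |f s - ℓ| ≤ A / ρ * Real.exp (-ρ * s) := by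
  set ε : ℝ → ℝ := fun t => A / ρ * Real.exp (-ρ * t) with hε
  have hεpos : ∀ t, 0 ≤ ε t := fun t => by positivity
  have hmono : MonotoneOn (fun s => f s - ε s) (Set.Ici 0) :=
    mono_aux f f' ρ A hρ hdiff (fun s hs => (abs_le.1 (hb s hs)).1)
  have hmono' : MonotoneOn (fun s => -f s - ε s) (Set.Ici 0) :=
    mono_aux (fun s => -f s) (fun s => -f' s) ρ A hρ (fun s hs => (hdiff s hs).neg)
      (fun s hs => by have h := (abs_le.1 (hb s hs)).2; beta_reduce; linarith)
  have hanti : AntitoneOn (fun s => f s + ε s) (Set.Ici 0) := by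
    intro x hx y hy hxy
    have := hmono' hx hy hxy
    simp only at this ⊢
    linarith
  -- upper bound for f on Ici 0
  have hub : ∀ s, 0 ≤ s → f s ≤ f 0 + ε 0 := by
    intro s hs
    have h1 := hanti (Set.self_mem_Ici) hs hs
    simp only at h1
    linarith [hεpos s]
  have hFmax_mono : Monotone fun s => f (max s 0) - ε (max s 0) := by
    intro x y hxy
    exact hmono (le_max_right x 0) (le_max_right y 0) (max_le_max hxy le_rfl)
  have hFbdd : BddAbove (Set.range fun s => f (max s 0) - ε (max s 0)) := by
    refine ⟨f 0 + ε 0, ?_⟩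
    rintro y ⟨s, rfl⟩
    have h0 : (0:ℝ) ≤ max s 0 := le_max_right s 0
    have := hub _ h0
    have := hεpos (max s 0)
    simp only
    linarith
  have hlim := tendsto_atTop_ciSup hFmax_mono hFbdd
  set ℓ := ⨆ s : ℝ, (f (max s 0) - ε (max s 0)) with hℓ
  have hFlim : Tendsto (fun s => f s - ε s) atTop (𝓝 ℓ) := by
    apply hlim.congr'
    filter_upwards [eventually_ge_atTop (0:ℝ)] with s hs
    rw [max_eq_left hs]
  have hεlim : Tendsto ε atTop (𝓝 0) := by
    have h1 : Tendsto (fun s : ℝ => ρ * s) atTop atTop :=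
      Tendsto.const_mul_atTop hρ tendsto_id
    have h2 := Real.tendsto_exp_neg_atTop_nhds_zero.comp h1
    have h3 : Tendsto (fun s : ℝ => A / ρ * Real.exp (-(ρ * s))) atTop (𝓝 (A / ρ * 0)) :=
      h2.const_mul _
    simpa [hε, neg_mul] using h3
  have hflim : Tendsto f atTop (𝓝 ℓ) := by
    have := hFlim.add hεlim
    simp only [sub_add_cancel, add_zero] at this
    exact this
  have hGlim : Tendsto (fun s => f s + ε s) atTop (𝓝 ℓ) := by
    have := hflim.add hεlim
    simpa using this
  refine ⟨ℓ, hflim, ?_⟩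
  intro s hs
  have h1 : f s - ε s ≤ ℓ := by
    apply ge_of_tendsto hFlim
    filter_upwards [eventually_ge_atTop s] with t ht
    exact hmono hs (hs.trans ht) ht
  have h2 : ℓ ≤ f s + ε s := by
    apply le_of_tendsto hGlim
    filter_upwards [eventually_ge_atTop s] with t ht
    exact hanti hs (hs.trans ht) ht
  rw [abs_le]
  constructor <;> simp only [hε] at h1 h2 ⊢ <;> linarith

private lemma expinv (x : ℝ) : Real.exp (-x) * Real.exp x = 1 := by
  rw [← Real.exp_add, neg_add_cancel, Real.exp_zero]


set_option maxHeartbeats 2000000 in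
/-- Under the additional trapping hypotheses `Y₂ < 0` and `Y₂ > -Y₁/2`
(i.e. the orbit `(1,1) + Y` stays in `{0 < z < 1} ∩ {z > 3/2 - w/2}`), the leading
coefficient `a` in the asymptotic expansion
`|Y(s) - a·e^(-(1+μ)s)·p - b·e^((μ-2)s)·q| ≤ C·e^(-2(1+μ)s)` is strictly positive. -/
theorem ode_leading_coefficient_positive (μ : ℝ) (hμ : 0 < μ) (hμ' : μ < 1 / 2)
    (Y : ℝ → EuclideanSpace ℝ (Fin 2))
    (hY_C1 : ContDiffOn ℝ 1 Y (Set.Ici 0))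
    (hY_ne : ∀ s : ℝ, 0 ≤ s → Y s ≠ 0)
    (hY_lim : Filter.Tendsto (fun s => ‖Y s‖) Filter.atTop (𝓝 0))
    (K : ℝ) (hK : 0 < K)
    (hY_ode : ∀ s : ℝ, 0 ≤ s →
      ‖derivWithin Y (Set.Ici 0) s - Mmul μ (Y s)‖ ≤ K * ‖Y s‖ ^ 2)
    (hY2_neg : ∀ s : ℝ, 0 ≤ s → Y s 1 < 0)
    (hY2_trap : ∀ s : ℝ, 0 ≤ s → Y s 1 > -(Y s 0) / 2) :
    ∃ (a b C : ℝ), 0 < C ∧ 0 < a ∧ ∀ s : ℝ, 0 ≤ s →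
      ‖Y s - Real.exp (-(1 + μ) * s) • (a • pvec μ) -
          Real.exp ((μ - 2) * s) • (b • qvec μ)‖ ≤
        C * Real.exp (-2 * (1 + μ) * s) := by
  set ν : ℝ := 1 + μ with hν
  have hνpos : 0 < ν := by rw [hν]; linarith
  set δ : ℝ := 1 - 2 * μ with hδ
  have hδpos : 0 < δ := by rw [hδ]; linarith
  set L : ℝ := 18 * K / δ ^ 2 with hL
  have hLpos : 0 < L := by rw [hL]; positivity
  set D : ℝ → EuclideanSpace ℝ (Fin 2) := fun s => derivWithin Y (Set.Ici 0) s with hD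
  have hYd : ∀ s, 0 ≤ s → HasDerivWithinAt Y (D s) (Set.Ici 0) s := fun s hs =>
    ((hY_C1.differentiableOn one_ne_zero) s hs).hasDerivWithinAt
  have hcomp : ∀ s, 0 ≤ s → ∀ i : Fin 2,
      HasDerivWithinAt (fun t => Y t i) (D s i) (Set.Ici 0) s := by
    intro s hs i
    have := (EuclideanSpace.proj (𝕜 := ℝ) i).hasFDerivAt.comp_hasDerivWithinAt s (hYd s hs)
    exact this
  set al : ℝ → ℝ := fun s => (1 - μ) * Y s 0 + Y s 1 with hal
  set be : ℝ → ℝ := fun s => -(μ * Y s 0) - Y s 1 with hbe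
  set dal : ℝ → ℝ := fun s => (1 - μ) * D s 0 + D s 1 with hdal
  set dbe : ℝ → ℝ := fun s => -(μ * D s 0) - D s 1 with hdbe
  have hdα : ∀ s, 0 ≤ s → HasDerivWithinAt al (dal s) (Set.Ici 0) s := fun s hs =>
    ((hcomp s hs 0).const_mul (1 - μ)).add (hcomp s hs 1)
  have hdβ : ∀ s, 0 ≤ s → HasDerivWithinAt be (dbe s) (Set.Ici 0) s := fun s hs =>
    (((hcomp s hs 0).const_mul μ).neg).sub (hcomp s hs 1)
  -- pointwise trapping facts
  have hY0 : ∀ s, 0 ≤ s → 0 < Y s 0 := by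
    intro s hs
    have h1 := hY2_neg s hs
    have h2 := hY2_trap s hs
    linarith
  have hαpos : ∀ s, 0 ≤ s → 0 < al s := by
    intro s hs
    have h0 := hY0 s hs
    have h2 := hY2_trap s hs
    simp only [hal]
    nlinarith
  have hαY : ∀ s, 0 ≤ s → δ * ‖Y s‖ ≤ 3 * al s := by
    intro s hs
    have h0 := hY0 s hs
    have h1 := hY2_neg s hs
    have h2 := hY2_trap s hs
    have h3 := enorm2 (Y s)
    rw [abs_of_pos h0, abs_of_neg h1] at h3
    simp only [hal]
    rw [hδ]
    nlinarith [norm_nonneg (Y s)]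
  have hαle : ∀ s, 0 ≤ s → al s ≤ ‖Y s‖ := by
    intro s hs
    have h0 := hY0 s hs
    have h1 := hY2_neg s hs
    have h4 := eabs2 (Y s) 0
    rw [abs_of_pos h0] at h4
    simp only [hal]
    nlinarith
  -- error estimates
  have hEi : ∀ s, 0 ≤ s → ∀ i : Fin 2,
      |D s i - Mmul μ (Y s) i| ≤ K * ‖Y s‖ ^ 2 := by
    intro s hs i
    have h1 : D s i - Mmul μ (Y s) i = (D s - Mmul μ (Y s)) i := by simp
    rw [h1]
    exact (eabs2 _ i).trans (hY_ode s hs)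
  have hMm0 : ∀ w : EuclideanSpace ℝ (Fin 2), Mmul μ w 0 = -w 0 + w 1 := by
    intro w; simp [Mmul, EuclideanSpace.equiv]
  have hMm1 : ∀ w : EuclideanSpace ℝ (Fin 2),
      Mmul μ w 1 = -(μ * (1 - μ)) * w 0 - 2 * w 1 := by
    intro w; simp [Mmul, EuclideanSpace.equiv]
  have hYsq : ∀ s, 0 ≤ s → δ ^ 2 * ‖Y s‖ ^ 2 ≤ 9 * al s ^ 2 := by
    intro s hs
    have h1 := hαY s hs
    have h2 : 0 ≤ δ * ‖Y s‖ := mul_nonneg hδpos.le (norm_nonneg _)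
    nlinarith [mul_self_le_mul_self h2 h1]
  have herrα : ∀ s, 0 ≤ s → |dal s + ν * al s| ≤ L * al s ^ 2 := by
    intro s hs
    have hid : dal s + ν * al s =
        (1 - μ) * (D s 0 - Mmul μ (Y s) 0) + (D s 1 - Mmul μ (Y s) 1) := by
      rw [hMm0, hMm1]
      simp only [hdal, hal, hν]
      ring
    rw [hid]
    have h0 := hEi s hs 0
    have h1 := hEi s hs 1
    have h2 : |(1 - μ) * (D s 0 - Mmul μ (Y s) 0) + (D s 1 - Mmul μ (Y s) 1)| ≤
        (1 - μ) * |D s 0 - Mmul μ (Y s) 0| + |D s 1 - Mmul μ (Y s) 1| := by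
      refine (abs_add_le _ _).trans ?_
      rw [abs_mul, abs_of_pos (by linarith : (0:ℝ) < 1 - μ)]
    have h4 := abs_nonneg (D s 0 - Mmul μ (Y s) 0)
    have h5 : |(1 - μ) * (D s 0 - Mmul μ (Y s) 0) + (D s 1 - Mmul μ (Y s) 1)| ≤
        2 * K * ‖Y s‖ ^ 2 := by nlinarith [mul_nonneg hμ.le h4]
    have h6 := mul_le_mul_of_nonneg_right h5 (sq_nonneg δ)
    have h7 := mul_le_mul_of_nonneg_left (hYsq s hs)
        (by positivity : (0:ℝ) ≤ 2 * K)
    rw [hL]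
    rw [div_mul_eq_mul_div, le_div_iff₀ (by positivity : (0:ℝ) < δ ^ 2)]
    nlinarith [h6, h7]
  have herrβ : ∀ s, 0 ≤ s → |dbe s - (μ - 2) * be s| ≤ L * al s ^ 2 := by
    intro s hs
    have hid : dbe s - (μ - 2) * be s =
        -(μ * (D s 0 - Mmul μ (Y s) 0)) - (D s 1 - Mmul μ (Y s) 1) := by
      rw [hMm0, hMm1]
      simp only [hdbe, hbe]
      ring
    rw [hid]
    have h0 := hEi s hs 0
    have h1 := hEi s hs 1
    have h2 : |-(μ * (D s 0 - Mmul μ (Y s) 0)) - (D s 1 - Mmul μ (Y s) 1)| ≤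
        μ * |D s 0 - Mmul μ (Y s) 0| + |D s 1 - Mmul μ (Y s) 1| := by
      refine (abs_sub _ _).trans ?_
      rw [abs_neg, abs_mul, abs_of_pos hμ]
    have h4 := abs_nonneg (D s 0 - Mmul μ (Y s) 0)
    have h5 : |-(μ * (D s 0 - Mmul μ (Y s) 0)) - (D s 1 - Mmul μ (Y s) 1)| ≤
        2 * K * ‖Y s‖ ^ 2 := by nlinarith [mul_nonneg hμ.le h4]
    have h6 := mul_le_mul_of_nonneg_right h5 (sq_nonneg δ)
    have h7 := mul_le_mul_of_nonneg_left (hYsq s hs)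
        (by positivity : (0:ℝ) ≤ 2 * K)
    rw [hL]
    rw [div_mul_eq_mul_div, le_div_iff₀ (by positivity : (0:ℝ) < δ ^ 2)]
    nlinarith [h6, h7]
  -- u = e^{ν s} * al and its derivative
  set u : ℝ → ℝ := fun s => Real.exp (ν * s) * al s with hu_def
  set du : ℝ → ℝ := fun s => Real.exp (ν * s) * (dal s + ν * al s) with hdu_def
  have hu : ∀ s, 0 ≤ s → HasDerivWithinAt u (du s) (Set.Ici 0) s := by
    intro s hs
    have h1 : HasDerivAt (fun t : ℝ => ν * t) ν s := by
      simpa using (hasDerivAt_id s).const_mul ν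
    have he : HasDerivAt (fun t => Real.exp (ν * t)) (Real.exp (ν * s) * ν) s := h1.exp
    have h2 := he.hasDerivWithinAt.mul (hdα s hs)
    simp only [hu_def, hdu_def]
    refine h2.congr_deriv ?_
    ring
  have hupos : ∀ s, 0 ≤ s → 0 < u s := fun s hs => mul_pos (Real.exp_pos _) (hαpos s hs)
  have hαu : ∀ s : ℝ, al s = Real.exp (-ν * s) * u s := by
    intro s
    simp only [hu_def]
    have h1 := expinv (ν * s)
    rw [show -ν * s = -(ν * s) by ring]
    linear_combination (-(al s)) * h1
  have hdub : ∀ s, 0 ≤ s → |du s| ≤ L * Real.exp (-ν * s) * u s ^ 2 := by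
    intro s hs
    have h1 := herrα s hs
    have h2 : |du s| = Real.exp (ν * s) * |dal s + ν * al s| := by
      simp only [hdu_def]
      rw [abs_mul, abs_of_pos (Real.exp_pos _)]
    have h3 : Real.exp (-ν * s) * Real.exp (ν * s) = 1 := by
      rw [show -ν * s = -(ν * s) by ring]; exact expinv (ν * s)
    have h4 : L * Real.exp (-ν * s) * u s ^ 2 = Real.exp (ν * s) * (L * al s ^ 2) := by
      simp only [hu_def]
      linear_combination (L * al s ^ 2 * Real.exp (ν * s)) * h3
    rw [h2, h4]
    exact mul_le_mul_of_nonneg_left h1 (Real.exp_pos _).le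
  -- g = 1/u
  set g : ℝ → ℝ := fun s => (u s)⁻¹ with hg_def
  set dg : ℝ → ℝ := fun s => -du s / u s ^ 2 with hdg_def
  have hg : ∀ s, 0 ≤ s → HasDerivWithinAt g (dg s) (Set.Ici 0) s := fun s hs =>
    (hu s hs).inv (ne_of_gt (hupos s hs))
  have hgb : ∀ s, 0 ≤ s → |dg s| ≤ L * Real.exp (-ν * s) := by
    intro s hs
    have hup := hupos s hs
    simp only [hdg_def]
    rw [abs_div, abs_neg, abs_of_pos (pow_pos hup 2), div_le_iff₀ (pow_pos hup 2)]
    exact hdub s hs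
  obtain ⟨lg, hlgt, hlgb⟩ := decay_limit g dg ν L hνpos hLpos.le hg hgb
  -- pick s₀ far out where ‖Y‖ is small
  have hsmall : ∀ᶠ s in atTop, ‖Y s‖ < ν / (4 * L) :=
    hY_lim.eventually (gt_mem_nhds (by positivity))
  obtain ⟨s₀, hs₀0, hs₀small⟩ := ((eventually_ge_atTop (0:ℝ)).and hsmall).exists
  have hα₀ : 4 * L * al s₀ ≤ ν := by
    have h1 := (hαle s₀ hs₀0).trans hs₀small.le
    rw [le_div_iff₀ (by positivity : (0:ℝ) < 4 * L)] at h1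
    linarith
  have hq : L / ν * Real.exp (-ν * s₀) ≤ g s₀ / 4 := by
    have hup := hupos s₀ hs₀0
    have hg0pos : (0:ℝ) < g s₀ := inv_pos.2 hup
    have hgs0 : u s₀ * g s₀ = 1 := mul_inv_cancel₀ (ne_of_gt hup)
    have hstep1 : 4 * L * (Real.exp (-ν * s₀) * u s₀) ≤ ν := by
      rw [← hαu s₀]; exact hα₀
    have hstep2 : 4 * L * Real.exp (-ν * s₀) ≤ ν * g s₀ := by
      have h3 := mul_le_mul_of_nonneg_right hstep1 hg0pos.le
      calc 4 * L * Real.exp (-ν * s₀)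
          = 4 * L * (Real.exp (-ν * s₀) * u s₀) * g s₀ := by
            rw [show 4 * L * (Real.exp (-ν * s₀) * u s₀) * g s₀ =
              4 * L * Real.exp (-ν * s₀) * (u s₀ * g s₀) by ring, hgs0, mul_one]
        _ ≤ ν * g s₀ := h3
    rw [div_mul_eq_mul_div, div_le_div_iff₀ hνpos (by norm_num : (0:ℝ) < 4)]
    linarith [hstep2]
  have hgband : ∀ s, s₀ ≤ s → g s₀ / 2 ≤ g s ∧ g s ≤ 3 / 2 * g s₀ := by
    intro s hss
    have hs0 : 0 ≤ s := hs₀0.trans hss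
    have h1 := hlgb s hs0
    have h2 := hlgb s₀ hs₀0
    have h3 : Real.exp (-ν * s) ≤ Real.exp (-ν * s₀) := by
      apply Real.exp_le_exp.2
      nlinarith
    rw [abs_le] at h1 h2
    have hLN : (0:ℝ) ≤ L / ν := by positivity
    have h4 := mul_le_mul_of_nonneg_left h3 hLN
    constructor
    · linarith [h1.1, h1.2, h2.1, h2.2, hq, h4]
    · linarith [h1.1, h1.2, h2.1, h2.2, hq, h4]
  have huband : ∀ s, s₀ ≤ s → u s ≤ 2 * u s₀ ∧ 2 / 3 * u s₀ ≤ u s := by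
    intro s hss
    have hs0 : 0 ≤ s := hs₀0.trans hss
    obtain ⟨hga, hgb'⟩ := hgband s hss
    have hup := hupos s hs0
    have hup0 := hupos s₀ hs₀0
    have hgs : u s * g s = 1 := mul_inv_cancel₀ (ne_of_gt hup)
    have hgs0 : u s₀ * g s₀ = 1 := mul_inv_cancel₀ (ne_of_gt hup0)
    have hgpos : 0 < g s := by simp only [hg_def]; exact inv_pos.2 hup
    have hg0pos : 0 < g s₀ := by simp only [hg_def]; exact inv_pos.2 hup0
    constructor
    · nlinarith [hga, hgs, hgs0, hup, hup0, hgpos, hg0pos]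
    · nlinarith [hgb', hgs, hgs0, hup, hup0, hgpos, hg0pos]
  -- global bounds for u
  have hucont : ContinuousOn u (Set.Icc 0 s₀) := fun x hx =>
    ((hu x hx.1).continuousWithinAt).mono Set.Icc_subset_Ici_self
  obtain ⟨xM, hxM, hxMmax'⟩ := isCompact_Icc.exists_isMaxOn (Set.nonempty_Icc.2 hs₀0) hucont
  obtain ⟨xm, hxm, hxmmin'⟩ := isCompact_Icc.exists_isMinOn (Set.nonempty_Icc.2 hs₀0) hucont
  have hxMmax : ∀ y ∈ Set.Icc 0 s₀, u y ≤ u xM := fun y hy => hxMmax' hy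
  have hxmmin : ∀ y ∈ Set.Icc 0 s₀, u xm ≤ u y := fun y hy => hxmmin' hy
  set M : ℝ := max (u xM) (2 * u s₀) with hM
  set m : ℝ := min (u xm) (2 / 3 * u s₀) with hm
  have hmpos : 0 < m :=
    lt_min (hupos xm hxm.1) (by linarith [hupos s₀ hs₀0])
  have hMpos : 0 < M := lt_of_lt_of_le (by linarith [hupos s₀ hs₀0]) (le_max_right _ _)
  have hub' : ∀ s, 0 ≤ s → m ≤ u s ∧ u s ≤ M := by
    intro s hs
    rcases le_total s s₀ with h | h
    · exact ⟨(min_le_left _ _).trans (hxmmin s ⟨hs, h⟩),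
        (hxMmax s ⟨hs, h⟩).trans (le_max_left _ _)⟩
    · obtain ⟨h1, h2⟩ := huband s h
      exact ⟨(min_le_right _ _).trans h2, h1.trans (le_max_right _ _)⟩
  -- the limit ā of u
  set A : ℝ := L * M ^ 2 with hA
  have hApos : 0 < A := mul_pos hLpos (pow_pos hMpos 2)
  have hduA : ∀ s, 0 ≤ s → |du s| ≤ A * Real.exp (-ν * s) := by
    intro s hs
    obtain ⟨h1, h2⟩ := hub' s hs
    have h3 := hdub s hs
    have hup := hupos s hs
    have hexpp := Real.exp_pos (-ν * s)
    have h4 : u s ^ 2 ≤ M ^ 2 := by nlinarith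
    rw [hA]
    nlinarith [mul_le_mul_of_nonneg_left h4 (mul_nonneg hLpos.le hexpp.le)]
  obtain ⟨abar, habt, habb⟩ := decay_limit u du ν A hνpos hApos.le hu hduA
  have habar : m ≤ abar := by
    apply ge_of_tendsto habt
    filter_upwards [eventually_ge_atTop (0:ℝ)] with t ht
    exact (hub' t ht).1
  have habarpos : 0 < abar := lt_of_lt_of_le hmpos habar
  -- v = e^{(2-μ)s} * be and its limit
  set v : ℝ → ℝ := fun s => Real.exp ((2 - μ) * s) * be s with hv_def
  set dv : ℝ → ℝ := fun s => Real.exp ((2 - μ) * s) * (dbe s - (μ - 2) * be s) with hdv_def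
  have hv : ∀ s, 0 ≤ s → HasDerivWithinAt v (dv s) (Set.Ici 0) s := by
    intro s hs
    have h1 : HasDerivAt (fun t : ℝ => (2 - μ) * t) (2 - μ) s := by
      simpa using (hasDerivAt_id s).const_mul (2 - μ)
    have he : HasDerivAt (fun t => Real.exp ((2 - μ) * t))
        (Real.exp ((2 - μ) * s) * (2 - μ)) s := h1.exp
    have h2 := he.hasDerivWithinAt.mul (hdβ s hs)
    simp only [hv_def, hdv_def]
    refine h2.congr_deriv ?_
    ring
  have hdvb : ∀ s, 0 ≤ s → |dv s| ≤ A * Real.exp (-(3 * μ) * s) := by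
    intro s hs
    have h1 := herrβ s hs
    have h2 : |dv s| = Real.exp ((2 - μ) * s) * |dbe s - (μ - 2) * be s| := by
      simp only [hdv_def]; rw [abs_mul, abs_of_pos (Real.exp_pos _)]
    obtain ⟨hm1, hm2⟩ := hub' s hs
    have hαs := hαpos s hs
    have hexpn := Real.exp_pos (-ν * s)
    have hαM : al s ≤ M * Real.exp (-ν * s) := by
      rw [hαu s]
      nlinarith
    have hexpid : Real.exp ((2 - μ) * s) * (Real.exp (-ν * s) * Real.exp (-ν * s)) =
        Real.exp (-(3 * μ) * s) := by
      rw [← Real.exp_add, ← Real.exp_add, hν]; congr 1; ring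
    calc |dv s| = Real.exp ((2 - μ) * s) * |dbe s - (μ - 2) * be s| := h2
      _ ≤ Real.exp ((2 - μ) * s) * (L * al s ^ 2) :=
          mul_le_mul_of_nonneg_left h1 (Real.exp_pos _).le
      _ ≤ Real.exp ((2 - μ) * s) * (L * (M * Real.exp (-ν * s)) ^ 2) := by
          have h5 := Real.exp_pos ((2 - μ) * s)
          have h6 : al s ^ 2 ≤ (M * Real.exp (-ν * s)) ^ 2 := by nlinarith
          nlinarith [mul_le_mul_of_nonneg_left h6 (mul_nonneg hLpos.le h5.le)]
      _ = A * Real.exp (-(3 * μ) * s) := by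
          rw [hA]; linear_combination (L * M ^ 2) * hexpid
  obtain ⟨bbar, hbbt, hbbb⟩ := decay_limit v dv (3 * μ) A (by positivity) hApos.le hv hdvb
  -- assembly
  have hδne : δ ≠ 0 := ne_of_gt hδpos
  refine ⟨abar / δ, bbar / δ, 2 * (A / ν / δ) + 2 * (A / (3 * μ) / δ) + 1, ?_, ?_, ?_⟩
  · have t1 : (0:ℝ) ≤ A / ν / δ := div_nonneg (div_nonneg hApos.le hνpos.le) hδpos.le
    have t2 : (0:ℝ) ≤ A / (3 * μ) / δ :=
      div_nonneg (div_nonneg hApos.le (by linarith)) hδpos.le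
    linarith
  · exact div_pos habarpos hδpos
  intro s hs
  have hαb : |al s - Real.exp (-ν * s) * abar| ≤
      Real.exp (-ν * s) * (A / ν * Real.exp (-ν * s)) := by
    have h1 := habb s hs
    rw [hαu s, ← mul_sub, abs_mul, abs_of_pos (Real.exp_pos _)]
    exact mul_le_mul_of_nonneg_left h1 (Real.exp_pos _).le
  have hβu : ∀ t : ℝ, be t = Real.exp ((μ - 2) * t) * v t := by
    intro t
    simp only [hv_def]
    have h1 := expinv ((2 - μ) * t)
    rw [show (μ - 2) * t = -((2 - μ) * t) by ring]
    linear_combination (-(be t)) * h1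
  have hβb : |be s - Real.exp ((μ - 2) * s) * bbar| ≤
      Real.exp ((μ - 2) * s) * (A / (3 * μ) * Real.exp (-(3 * μ) * s)) := by
    have h1 := hbbb s hs
    rw [hβu s, ← mul_sub, abs_mul, abs_of_pos (Real.exp_pos _)]
    exact mul_le_mul_of_nonneg_left h1 (Real.exp_pos _).le
  have hdecomp : Y s - Real.exp (-ν * s) • ((abar / δ) • pvec μ) -
      Real.exp ((μ - 2) * s) • ((bbar / δ) • qvec μ) =
      ((al s - Real.exp (-ν * s) * abar) / δ) • pvec μ +
      ((be s - Real.exp ((μ - 2) * s) * bbar) / δ) • qvec μ := by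
    have hδ' : (1:ℝ) - 2 * μ ≠ 0 := by linarith
    ext i
    fin_cases i <;>
    · simp only [hal, hbe, pvec, qvec, PiLp.sub_apply, PiLp.add_apply, PiLp.smul_apply,
        smul_eq_mul, EuclideanSpace.equiv, ContinuousLinearEquiv.symm_symm]
      simp [hδ]
      field_simp [hδ']
      ring
  rw [hdecomp]
  have hp2 : ‖pvec μ‖ ≤ 2 := by
    refine (enorm2 _).trans ?_
    have h0 : (pvec μ) 0 = 1 := by simp [pvec, EuclideanSpace.equiv]
    have h1 : (pvec μ) 1 = -μ := by simp [pvec, EuclideanSpace.equiv]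
    rw [h0, h1, abs_one, abs_neg, abs_of_pos hμ]
    linarith
  have hq2 : ‖qvec μ‖ ≤ 2 := by
    refine (enorm2 _).trans ?_
    have h0 : (qvec μ) 0 = 1 := by simp [qvec, EuclideanSpace.equiv]
    have h1 : (qvec μ) 1 = μ - 1 := by simp [qvec, EuclideanSpace.equiv]
    rw [h0, h1, abs_one, abs_of_neg (by linarith : μ - 1 < 0)]
    linarith
  have hexp2 : Real.exp (-ν * s) * Real.exp (-ν * s) = Real.exp (-2 * ν * s) := by
    rw [← Real.exp_add]; congr 1; ring
  have hexp2' : Real.exp ((μ - 2) * s) * Real.exp (-(3 * μ) * s) = Real.exp (-2 * ν * s) := by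
    rw [← Real.exp_add, hν]; congr 1; ring
  have hc1 : |(al s - Real.exp (-ν * s) * abar) / δ| ≤
      A / ν / δ * Real.exp (-2 * ν * s) := by
    rw [abs_div, abs_of_pos hδpos, div_le_iff₀ hδpos]
    have h10 : Real.exp (-ν * s) * (A / ν * Real.exp (-ν * s)) =
        A / ν / δ * Real.exp (-2 * ν * s) * δ := by
      rw [← hexp2]; field_simp
    linarith [hαb, h10.le, h10.ge]
  have hc2 : |(be s - Real.exp ((μ - 2) * s) * bbar) / δ| ≤
      A / (3 * μ) / δ * Real.exp (-2 * ν * s) := by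
    rw [abs_div, abs_of_pos hδpos, div_le_iff₀ hδpos]
    have h10 : Real.exp ((μ - 2) * s) * (A / (3 * μ) * Real.exp (-(3 * μ) * s)) =
        A / (3 * μ) / δ * Real.exp (-2 * ν * s) * δ := by
      rw [← hexp2']; field_simp
    linarith [hβb, h10.le, h10.ge]
  calc ‖((al s - Real.exp (-ν * s) * abar) / δ) • pvec μ +
        ((be s - Real.exp ((μ - 2) * s) * bbar) / δ) • qvec μ‖
      ≤ ‖((al s - Real.exp (-ν * s) * abar) / δ) • pvec μ‖ +
        ‖((be s - Real.exp ((μ - 2) * s) * bbar) / δ) • qvec μ‖ := norm_add_le _ _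
    _ = |(al s - Real.exp (-ν * s) * abar) / δ| * ‖pvec μ‖ +
        |(be s - Real.exp ((μ - 2) * s) * bbar) / δ| * ‖qvec μ‖ := by
        rw [norm_smul, norm_smul, Real.norm_eq_abs, Real.norm_eq_abs]
    _ ≤ |(al s - Real.exp (-ν * s) * abar) / δ| * 2 +
        |(be s - Real.exp ((μ - 2) * s) * bbar) / δ| * 2 := by
        have := abs_nonneg ((al s - Real.exp (-ν * s) * abar) / δ)
        have := abs_nonneg ((be s - Real.exp ((μ - 2) * s) * bbar) / δ)
        exact add_le_add (mul_le_mul_of_nonneg_left hp2 (by assumption))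
          (mul_le_mul_of_nonneg_left hq2 (by assumption))
    _ ≤ (2 * (A / ν / δ) + 2 * (A / (3 * μ) / δ) + 1) * Real.exp (-2 * ν * s) := by
        have hep := Real.exp_pos (-2 * ν * s)
        nlinarith [hc1, hc2]
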